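/- For all integers i ≥ 0 and j ≥ 0, the number S̃_{i,j+1} of restricted Schröder paths from (i,0) to (0,j+1) equals the coefficient of r^i s^j in the formal power series expansion of 2r / ((1−r)(1−r−s−rs)). In particular S̃_{0,j+1} = 0 and S̃_{i,1} = 2i. -/

import Mathlib

open Finset

namespace Paper20V

/-! ## Vertex-model configurations -/

/-- Raw data of a 20V configuration on the `n × n` grid: occupation of the
horizontal, vertical and diagonal inner edges (indexed zero-based; the raw
position `(a,b)` corresponds to the 1-based grid point `(a+1, b+1)`). -/
abbrev Cfg20 (n : ℕ) := (Fin n × Fin n → Bool) × (Fin n × Fin n → Bool) × (Fin n × Fin n → Bool)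

/-- Read a `Fin n × Fin n`-indexed table at the 1-based position `(x, y)`. -/
def rd {n : ℕ} (f : Fin n × Fin n → Bool) (x y : ℕ) : Bool :=
  if h : x - 1 < n ∧ y - 1 < n then f (⟨x - 1, h.1⟩, ⟨y - 1, h.2⟩) else false

/-- The raw data only uses the genuinely existing inner edges:
horizontal edges exist for `x ≤ n-1`, vertical ones for `y ≤ n-1`,
diagonal ones for `x, y ≤ n-1` (1-based). -/
def Valid20 (n : ℕ) (c : Cfg20 n) : Prop :=
  (∀ p : Fin n × Fin n, (p.1 : ℕ) + 1 = n → c.1 p = false) ∧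
  (∀ p : Fin n × Fin n, (p.2 : ℕ) + 1 = n → c.2.1 p = false) ∧
  (∀ p : Fin n × Fin n, ((p.1 : ℕ) + 1 = n ∨ (p.2 : ℕ) + 1 = n) → c.2.2 p = false)

/-- Occupation of the West in-slot of the 1-based vertex `(x,y)`. -/
def Wocc {n : ℕ} (c : Cfg20 n) (x y : ℕ) : Bool :=
  if x = 1 then true else rd c.1 (x - 1) y

/-- Occupation of the North-West in-slot of `(x,y)`; `bc2 = false` for DWBC1,
`bc2 = true` for DWBC2 (where the NW in-slot of `(1,n)` is unoccupied). -/
def NWocc (bc2 : Bool) {n : ℕ} (c : Cfg20 n) (x y : ℕ) : Bool :=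
  if x = 1 then (if bc2 then decide (y ≠ n) else true)
  else if y = n then false else rd c.2.2 (x - 1) y

/-- Occupation of the North in-slot of `(x,y)`. -/
def Nocc {n : ℕ} (c : Cfg20 n) (x y : ℕ) : Bool :=
  if y = n then false else rd c.2.1 x y

/-- Occupation of the East out-slot of `(x,y)`. -/
def Eocc {n : ℕ} (c : Cfg20 n) (x y : ℕ) : Bool :=
  if x = n then false else rd c.1 x y

/-- Occupation of the South-East out-slot of `(x,y)`; `bc2 = true` for DWBC2
(where the SE out-slot of `(n,1)` is unoccupied). -/
def SEocc (bc2 : Bool) {n : ℕ} (c : Cfg20 n) (x y : ℕ) : Bool :=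
  if y = 1 then (if bc2 then decide (x ≠ n) else true)
  else if x = n then false else rd c.2.2 x (y - 1)

/-- Occupation of the South out-slot of `(x,y)`. -/
def Socc {n : ℕ} (c : Cfg20 n) (x y : ℕ) : Bool :=
  if y = 1 then true else rd c.2.1 x (y - 1)

/-- A 20V configuration with DWBC1 (`bc2 = false`) or DWBC2 (`bc2 = true`):
at every vertex the number of occupied in-slots is the number of occupied
out-slots. -/
def IsCfg20 (bc2 : Bool) (n : ℕ) (c : Cfg20 n) : Prop :=
  Valid20 n c ∧ ∀ x ∈ Icc 1 n, ∀ y ∈ Icc 1 n,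
    (Wocc c x y).toNat + (NWocc bc2 c x y).toNat + (Nocc c x y).toNat =
    (Eocc c x y).toNat + (SEocc bc2 c x y).toNat + (Socc c x y).toNat

/-- Number of occupied inner vertical edges in the last column `x = n`. -/
def vcount20 {n : ℕ} (c : Cfg20 n) : ℕ := ∑ y ∈ Icc 1 (n - 1), (rd c.2.1 n y).toNat

/-- The number of 20V configurations with DWBC1 resp. DWBC2. -/
noncomputable def Z20 (bc2 : Bool) (n : ℕ) : ℕ := Nat.card {c : Cfg20 n // IsCfg20 bc2 n c}

/-- Refined 20V partition function `Σ_C τ^{v(C)}`. -/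
noncomputable def Zhat20 (bc2 : Bool) (n : ℕ) (τ : ℂ) : ℂ :=
  ∑ᶠ c : {c : Cfg20 n // IsCfg20 bc2 n c}, τ ^ vcount20 c.1

/-- Number of 20V configurations with `v(C) = ℓ - 1`. -/
noncomputable def Z20ref (bc2 : Bool) (n ℓ : ℕ) : ℕ :=
  Nat.card {c : Cfg20 n // IsCfg20 bc2 n c ∧ vcount20 c = ℓ - 1}

/-- Raw data of a 6V configuration: horizontal and vertical inner edges. -/
abbrev Cfg6 (n : ℕ) := (Fin n × Fin n → Bool) × (Fin n × Fin n → Bool)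

def Valid6 (n : ℕ) (c : Cfg6 n) : Prop :=
  (∀ p : Fin n × Fin n, (p.1 : ℕ) + 1 = n → c.1 p = false) ∧
  (∀ p : Fin n × Fin n, (p.2 : ℕ) + 1 = n → c.2 p = false)

def W6 {n : ℕ} (c : Cfg6 n) (x y : ℕ) : Bool := if x = 1 then true else rd c.1 (x - 1) y
def N6 {n : ℕ} (c : Cfg6 n) (x y : ℕ) : Bool := if y = n then false else rd c.2 x y
def E6 {n : ℕ} (c : Cfg6 n) (x y : ℕ) : Bool := if x = n then false else rd c.1 x y
def S6 {n : ℕ} (c : Cfg6 n) (x y : ℕ) : Bool := if y = 1 then true else rd c.2 x (y - 1)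

/-- A 6V configuration with domain wall boundary conditions. -/
def Is6V (n : ℕ) (c : Cfg6 n) : Prop :=
  Valid6 n c ∧ ∀ x ∈ Icc 1 n, ∀ y ∈ Icc 1 n,
    (W6 c x y).toNat + (N6 c x y).toNat = (E6 c x y).toNat + (S6 c x y).toNat

/-- Number of vertices whose occupied slots are exactly `{W,E}` or exactly `{N,S}`. -/
def bcount {n : ℕ} (c : Cfg6 n) : ℕ :=
  ∑ x ∈ Icc 1 n, ∑ y ∈ Icc 1 n,
    ((W6 c x y && E6 c x y && !N6 c x y && !S6 c x y) ||
     (N6 c x y && S6 c x y && !W6 c x y && !E6 c x y)).toNat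

/-- Number of occupied inner vertical edges in the last column `x = n`. -/
def vcount6 {n : ℕ} (c : Cfg6 n) : ℕ := ∑ y ∈ Icc 1 (n - 1), (rd c.2 n y).toNat

/-- The 6V-DWBC partition function with weights `(1, √2, 1)`. -/
noncomputable def Z6V (n : ℕ) : ℝ :=
  ∑ᶠ c : {c : Cfg6 n // Is6V n c}, Real.sqrt 2 ^ bcount c.1

/-- The refined 6V-DWBC partition function `Σ_C (√2)^{b(C)} σ^{v(C)}`. -/
noncomputable def Zhat6V (n : ℕ) (σ : ℂ) : ℂ :=
  ∑ᶠ c : {c : Cfg6 n // Is6V n c}, (Real.sqrt 2 : ℂ) ^ bcount c.1 * σ ^ vcount6 c.1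

/-- `Z^{6V}_m`: the `(√2)^{b}`-weighted number of 6V-DWBC configurations with
`v(C) = m - 1`. -/
noncomputable def Z6Vref (n m : ℕ) : ℝ :=
  ∑ᶠ c : {c : Cfg6 n // Is6V n c ∧ vcount6 c = m - 1}, Real.sqrt 2 ^ bcount c.1

/-! ## Schröder paths -/

/-- A single Schröder step: `(-1,0)`, `(0,1)` or `(-1,1)`. -/
def SchStep (p q : ℤ × ℤ) : Prop :=
  q = (p.1 - 1, p.2) ∨ q = (p.1, p.2 + 1) ∨ q = (p.1 - 1, p.2 + 1)

/-- A Schröder path from `(i,0)` to `(0,j)`. -/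
def IsSch (P : List (ℤ × ℤ)) (i j : ℕ) : Prop :=
  P ≠ [] ∧ P.head? = some ((i : ℤ), 0) ∧ P.getLast? = some (0, (j : ℤ)) ∧ P.Chain' SchStep

/-- A restricted Schröder path: the last step is not the up step `(0,1)`. -/
def IsRSch (P : List (ℤ × ℤ)) (i j : ℕ) : Prop :=
  IsSch P i j ∧ ∀ a b : ℤ × ℤ, [a, b] <:+ P → b ≠ (a.1, a.2 + 1)

/-- `S̃_{i,j}`: the number of restricted Schröder paths from `(i,0)` to `(0,j)`. -/
noncomputable def Stilde (i j : ℕ) : ℕ := Nat.card {P : List (ℤ × ℤ) // IsRSch P i j}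

/-- A valid family of pairwise vertex-disjoint restricted Schröder paths indexed
by the finite set `F`: for `k ∈ F` the path `p k` goes from `(k,0)` to `(0,k+1)`,
and for `k ∉ F` we set `p k = []`. -/
def FamValid (F : Finset ℕ) (p : ℕ → List (ℤ × ℤ)) : Prop :=
  (∀ k ∈ F, IsRSch (p k) k (k + 1)) ∧
  (∀ k, k ∉ F → p k = []) ∧
  (∀ k ∈ F, ∀ l ∈ F, k ≠ l → ∀ q ∈ p k, q ∉ p l)

/-- Number of `(-1,0)` steps of `P` taken at height `y = m`. -/
def hStepsAt (m : ℤ) (P : List (ℤ × ℤ)) : ℕ :=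
  (P.zip P.tail).countP fun q => decide (q.2 = (q.1.1 - 1, q.1.2) ∧ q.1.2 = m)

/-- Number of `(-1,1)` steps of `P` arriving at height `y = m`. -/
def dStepsTo (m : ℤ) (P : List (ℤ × ℤ)) : ℕ :=
  (P.zip P.tail).countP fun q => decide (q.2 = (q.1.1 - 1, q.1.2 + 1) ∧ q.2.2 = m)

/-! ## Power series -/

/-- The variable `r` of `ℂ[[r,s]]`. -/
noncomputable def Pr : MvPowerSeries (Fin 2) ℂ := MvPowerSeries.X 0
/-- The variable `s` of `ℂ[[r,s]]`. -/
noncomputable def Ps : MvPowerSeries (Fin 2) ℂ := MvPowerSeries.X 1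
/-- Constants in `ℂ[[r,s]]`. -/
noncomputable def Pc (z : ℂ) : MvPowerSeries (Fin 2) ℂ := MvPowerSeries.C (σ := Fin 2) (R := ℂ) z
/-- The coefficient of `r^a s^b`. -/
noncomputable def cf (a b : ℕ) (F : MvPowerSeries (Fin 2) ℂ) : ℂ :=
  MvPowerSeries.coeff (σ := Fin 2) (R := ℂ) (Finsupp.single 0 a + Finsupp.single 1 b) F

/-- The generating function `1/(1-rs) + 2r/((1-r)(1-r-s-rs))` of `I + M`. -/
noncomputable def Gfun : MvPowerSeries (Fin 2) ℂ :=
  (1 - Pr * Ps)⁻¹ + 2 * Pr * ((1 - Pr) * (1 - Pr - Ps - Pr * Ps))⁻¹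

/-- `1/(1-rs) + 2τr/((1-τr)(1-r-s-rs))`: type-1 last column. -/
noncomputable def Gfun1 (τ : ℂ) : MvPowerSeries (Fin 2) ℂ :=
  (1 - Pr * Ps)⁻¹ + 2 * Pc τ * Pr * ((1 - Pc τ * Pr) * (1 - Pr - Ps - Pr * Ps))⁻¹

/-- `1/(1-rs) + (1+τ)r/((1-τr)(1-r-s-rs))`: type-2 last column. -/
noncomputable def Gfun2 (τ : ℂ) : MvPowerSeries (Fin 2) ℂ :=
  (1 - Pr * Ps)⁻¹ + (1 + Pc τ) * Pr * ((1 - Pc τ * Pr) * (1 - Pr - Ps - Pr * Ps))⁻¹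

end Paper20V

namespace Paper20V

/-! ### Auxiliary: Schröder path combinatorics -/

/-- Generalized restricted path predicate with arbitrary endpoints. -/
def Gen (P : List (ℤ × ℤ)) (a b : ℤ × ℤ) : Prop :=
  P ≠ [] ∧ P.head? = some a ∧ P.getLast? = some b ∧ P.Chain' SchStep ∧
    ∀ x y : ℤ × ℤ, [x, y] <:+ P → y ≠ (x.1, x.2 + 1)

lemma isRSch_iff_gen {P : List (ℤ × ℤ)} {i j : ℕ} :
    IsRSch P i j ↔ Gen P ((i : ℤ), 0) (0, (j : ℤ)) := by
  unfold IsRSch IsSch Gen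
  tauto

def sh (p : ℤ × ℤ) : ℤ × ℤ := (p.1, p.2 + 1)
def unsh (p : ℤ × ℤ) : ℤ × ℤ := (p.1, p.2 - 1)

lemma unsh_sh (p : ℤ × ℤ) : unsh (sh p) = p := by simp [sh, unsh]
lemma sh_unsh (p : ℤ × ℤ) : sh (unsh p) = p := by simp [sh, unsh]

lemma schStep_sh {p q : ℤ × ℤ} (h : SchStep p q) : SchStep (sh p) (sh q) := by
  rcases h with h | h | h <;> simp [SchStep, sh, h]
lemma schStep_unsh {p q : ℤ × ℤ} (h : SchStep p q) : SchStep (unsh p) (unsh q) := by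
  rcases h with h | h | h <;> simp [SchStep, unsh, h]

lemma gen_map {P : List (ℤ × ℤ)} {a b : ℤ × ℤ} (f g : ℤ × ℤ → ℤ × ℤ)
    (hfg : ∀ p, g (f p) = p)
    (hstep : ∀ p q, SchStep p q → SchStep (f p) (f q))
    (hup : ∀ x y : ℤ × ℤ, y = (x.1, x.2 + 1) → g y = ((g x).1, (g x).2 + 1))
    (h : Gen P a b) : Gen (P.map f) (f a) (f b) := by
  obtain ⟨hne, hh, hl, hc, hr⟩ := h
  refine ⟨by simpa using hne, by rw [List.head?_map, hh]; rfl,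
    by rw [List.getLast?_map, hl]; rfl, ?_, ?_⟩
  · show List.IsChain _ _; rw [List.isChain_map]
    exact (show List.IsChain _ _ from hc).imp fun {p q} h => hstep p q h
  · intro x y hs hxy
    have hs' : [g x, g y] <:+ P := by
      have := hs.map g
      rwa [List.map_map, (by funext p; simp [hfg] : g ∘ f = id), List.map_id] at this
    exact hr (g x) (g y) hs' (hup x y hxy)

/-- Monotonicity of coordinates along a Schröder chain. -/
lemma gen_mono : ∀ (P : List (ℤ × ℤ)), P.Chain' SchStep →
    ∀ h l p : ℤ × ℤ, P.head? = some h → P.getLast? = some l → p ∈ P →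
      l.1 ≤ p.1 ∧ p.1 ≤ h.1 ∧ h.2 ≤ p.2 ∧ p.2 ≤ l.2 := by
  intro P
  induction P with
  | nil => intro _ h l p hh; simp at hh
  | cons a t ih =>
    intro hc h l p hh hl hp
    simp only [List.head?_cons, Option.some.injEq] at hh
    subst hh
    rcases t with _ | ⟨b, t'⟩
    · simp at hl hp
      subst hl; subst hp; omega
    · have hstep : SchStep a b := (List.isChain_cons_cons.mp hc).1
      have hc' : (b :: t').Chain' SchStep := (List.isChain_cons_cons.mp hc).2
      have hl' : (b :: t').getLast? = some l := by
        rw [List.getLast?_cons_cons] at hl; exact hl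
      have hb := ih hc' b l b rfl hl' (by simp)
      have hab : b.1 ≤ a.1 ∧ a.2 ≤ b.2 := by
        rcases hstep with h | h | h <;> simp [h] <;> omega
      rcases List.mem_cons.mp hp with rfl | hp'
      · have := ih hc' b l b rfl hl' (by simp)
        omega
      · have := ih hc' b l p rfl hl' hp'
        omega

lemma gen_len : ∀ (P : List (ℤ × ℤ)), P.Chain' SchStep →
    ∀ h l : ℤ × ℤ, P.head? = some h → P.getLast? = some l →
      P.length ≤ (h.1 - l.1 + (l.2 - h.2)).toNat + 1 := by
  intro P
  induction P with
  | nil => intro _ h l hh; simp at hh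
  | cons a t ih =>
    intro hc h l hh hl
    simp only [List.head?_cons, Option.some.injEq] at hh
    subst hh
    rcases t with _ | ⟨b, t'⟩
    · simp only [List.getLast?_singleton, Option.some.injEq] at hl
      subst hl; simp
    · have hstep : SchStep a b := (List.isChain_cons_cons.mp hc).1
      have hc' : (b :: t').Chain' SchStep := (List.isChain_cons_cons.mp hc).2
      have hl' : (b :: t').getLast? = some l := by
        rw [List.getLast?_cons_cons] at hl; exact hl
      have h1 := ih hc' b l rfl hl'
      have h2 := gen_mono (b :: t') hc' b l b rfl hl' (by simp)
      have hab : b.1 + 1 ≤ a.1 + (b.2 - a.2) ∧ b.1 ≤ a.1 ∧ a.2 ≤ b.2 := by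
        rcases hstep with h | h | h <;> simp [h] <;> omega
      simp only [List.length_cons] at h1 ⊢
      omega

/-- Extract the last step of a path with at least 2 points. -/
lemma last_two : ∀ (P : List (ℤ × ℤ)), 2 ≤ P.length →
    ∀ l, P.getLast? = some l → ∃ a, [a, l] <:+ P := by
  intro P
  induction P with
  | nil => simp
  | cons x t ih =>
    intro hlen l hl
    rcases t with _ | ⟨y, t'⟩
    · simp at hlen
    · rcases t' with _ | ⟨z, t''⟩
      · have hly : l = y := by simpa using hl.symm
        subst hly
        exact ⟨x, List.suffix_refl _⟩
      · have := ih (by simp) l (by rw [List.getLast?_cons_cons] at hl; exact hl)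
        obtain ⟨a, ha⟩ := this
        exact ⟨a, ha.trans (List.suffix_cons x _)⟩

lemma gen_cons {P : List (ℤ × ℤ)} {h b v : ℤ × ℤ} (hP : Gen P h b) (hs : SchStep v h)
    (hlast : h = (v.1, v.2 + 1) → 2 ≤ P.length) : Gen (v :: P) v b := by
  obtain ⟨hne, hh, hl, hc, hr⟩ := hP
  refine ⟨by simp, rfl, ?_, ?_, ?_⟩
  · rcases P with _ | ⟨x, t⟩
    · exact absurd rfl hne
    · rw [List.getLast?_cons_cons]; exact hl
  · exact List.isChain_cons.mpr ⟨fun y hy => by rw [hh] at hy; cases hy; exact hs, hc⟩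
  · intro x y hsuf hxy
    rcases List.suffix_cons_iff.mp hsuf with heq | hsuf'
    · have hx : x = v := by injection heq
      have hPy : P = [y] := by injection heq with _ h2; exact h2.symm
      have hy : y = h := by rw [hPy] at hh; simpa using hh
      subst hx hy
      have := hlast hxy
      rw [hPy] at this; simp at this
    · exact hr x y hsuf' hxy

lemma gen_uncons {P : List (ℤ × ℤ)} {v b : ℤ × ℤ} (hP : Gen (v :: P) v b) (hne : P ≠ []) :
    ∃ h, P.head? = some h ∧ SchStep v h ∧ Gen P h b := by
  obtain ⟨_, _, hl, hc, hr⟩ := hP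
  rcases P with _ | ⟨x, t⟩
  · exact absurd rfl hne
  refine ⟨x, rfl, (List.isChain_cons_cons.mp hc).1, by simp, rfl, ?_, (List.isChain_cons_cons.mp hc).2, ?_⟩
  · rw [List.getLast?_cons_cons] at hl; exact hl
  · intro a c hsuf; exact hr a c (hsuf.trans (List.suffix_cons v _))

lemma gen_head_eq_last {P : List (ℤ × ℤ)} {a b : ℤ × ℤ} (hP : Gen P a b)
    (hlen : P.length < 2) : a = b := by
  obtain ⟨hne, hh, hl, _, _⟩ := hP
  rcases P with _ | ⟨x, t⟩
  · exact absurd rfl hne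
  rcases t with _ | ⟨y, t'⟩
  · simp only [List.head?_cons, Option.some.injEq] at hh
    simp only [List.getLast?_singleton, Option.some.injEq] at hl
    rw [← hh, ← hl]
  · simp only [List.length_cons] at hlen; omega

/-- Finiteness of the set of restricted Schröder paths. -/
lemma isRSch_finite (i j : ℕ) : {P : List (ℤ × ℤ) | IsRSch P i j}.Finite := by
  have hbox : (Set.Icc ((0 : ℤ), (0 : ℤ)) ((i : ℤ), (j : ℤ))).Finite := Set.finite_Icc _ _
  have : Finite ↥(Set.Icc ((0 : ℤ), (0 : ℤ)) ((i : ℤ), (j : ℤ))) := hbox.to_subtype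
  have hfin : {l : List ↥(Set.Icc ((0 : ℤ), (0 : ℤ)) ((i : ℤ), (j : ℤ))) |
      l.length ≤ i + j + 1}.Finite := List.finite_length_le _ _
  apply Set.Finite.subset ((hfin.image (List.map Subtype.val)))
  intro P hP
  obtain ⟨hne, hh, hl, hc, _⟩ := isRSch_iff_gen.mp hP
  have hmem : ∀ p ∈ P, p ∈ Set.Icc ((0 : ℤ), (0 : ℤ)) ((i : ℤ), (j : ℤ)) := by
    intro p hp
    have := gen_mono P hc _ _ p hh hl hp
    obtain ⟨h1, h2, h3, h4⟩ := this
    exact Set.mem_Icc.mpr ⟨⟨h1, h3⟩, ⟨h2, h4⟩⟩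
  have hlen : P.length ≤ i + j + 1 := by
    have := gen_len P hc _ _ hh hl
    simp at this; omega
  refine ⟨P.attach.map (fun x => ⟨x.1, hmem x.1 x.2⟩), ?_, ?_⟩
  · simpa using hlen
  · have hco : (Subtype.val ∘ fun x : {x // x ∈ P} =>
        (⟨x.1, hmem x.1 x.2⟩ : ↥(Set.Icc ((0 : ℤ), (0 : ℤ)) ((i : ℤ), (j : ℤ))))) =
        Subtype.val := rfl
    rw [List.map_map, hco, List.attach_map_subtype_val]

lemma hup_sh : ∀ x y : ℤ × ℤ, y = (x.1, x.2 + 1) → sh y = ((sh x).1, (sh x).2 + 1) := by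
  intro x y h; simp [sh, h]
lemma hup_unsh : ∀ x y : ℤ × ℤ, y = (x.1, x.2 + 1) → unsh y = ((unsh x).1, (unsh x).2 + 1) := by
  intro x y h; simp [unsh, h]

lemma sh_inj : Function.Injective sh := Function.LeftInverse.injective unsh_sh

lemma stilde_ncard (i j : ℕ) : Stilde i j = {P : List (ℤ × ℤ) | IsRSch P i j}.ncard := rfl

lemma setL1 : {P : List (ℤ × ℤ) | IsRSch P 0 0} = {[((0 : ℤ), (0 : ℤ))]} := by
  ext P
  simp only [Set.mem_setOf_eq, Set.mem_singleton_iff, isRSch_iff_gen]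
  constructor
  · intro hg
    obtain ⟨hne, hh, hl, hc, hr⟩ := hg
    rcases P with _ | ⟨v, tl⟩
    · exact absurd rfl hne
    have hv : v = ((0 : ℤ), (0 : ℤ)) := by simpa using hh
    subst hv
    rcases tl with _ | ⟨x, t⟩
    · rfl
    · exfalso
      obtain ⟨h, hhd, hs, hgen⟩ := gen_uncons ⟨hne, hh, hl, hc, hr⟩ (by simp)
      have hmem : h ∈ x :: t := List.mem_of_mem_head? (by rw [hhd]; rfl)
      have hmono := gen_mono (x :: t) hgen.2.2.2.1 _ _ h hgen.2.1 hgen.2.2.1 hmem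
      have m1 : (0 : ℤ) ≤ h.1 := hmono.1
      have m4 : h.2 ≤ (0 : ℤ) := hmono.2.2.2
      rcases hs with hcase | hcase | hcase <;> rw [hcase] at m1 m4 <;> simp at m1 m4 <;> omega
  · rintro rfl
    refine ⟨by simp, by simp, by simp, List.isChain_singleton _, ?_⟩
    intro x y hs
    have := hs.length_le
    simp at this

lemma setL2 (j : ℕ) : {P : List (ℤ × ℤ) | IsRSch P 0 (j + 1)} = ∅ := by
  rw [Set.eq_empty_iff_forall_notMem]
  intro P hP
  obtain ⟨hne, hh, hl, hc, hr⟩ := isRSch_iff_gen.mp hP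
  have hlen2 : 2 ≤ P.length := by
    by_contra hcon
    have h2 := gen_head_eq_last ⟨hne, hh, hl, hc, hr⟩ (by omega)
    rw [Prod.ext_iff] at h2
    have : (0 : ℤ) = ((j : ℤ) + 1) := by push_cast at h2; exact h2.2
    omega
  obtain ⟨a, ha⟩ := last_two P hlen2 _ hl
  have hcs : SchStep a ((0 : ℤ), ((j + 1 : ℕ) : ℤ)) := (List.isChain_cons_cons.mp (hc.suffix ha)).1
  have hamem : a ∈ P := ha.subset (by simp)
  have hmono := gen_mono P hc _ _ a hh hl hamem
  have m1 : (0 : ℤ) ≤ a.1 := hmono.1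
  have m2 : a.1 ≤ (0 : ℤ) := hmono.2.1
  rcases hcs with h | h | h
  · rw [Prod.ext_iff] at h; simp at h; omega
  · exact hr a _ ha h
  · rw [Prod.ext_iff] at h; simp at h; omega

lemma setL3 (i : ℕ) : {P : List (ℤ × ℤ) | IsRSch P (i + 1) 0} =
    (fun Q => (((i + 1 : ℕ) : ℤ), (0 : ℤ)) :: Q) '' {Q | IsRSch Q i 0} := by
  ext P
  simp only [Set.mem_setOf_eq, Set.mem_image]
  constructor
  · intro hg
    obtain hg' := isRSch_iff_gen.mp hg
    rcases P with _ | ⟨v, tl⟩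
    · exact absurd rfl hg'.1
    have hv : v = (((i + 1 : ℕ) : ℤ), (0 : ℤ)) := by simpa using hg'.2.1
    subst hv
    have htl : tl ≠ [] := by
      intro h; subst h
      have h2 := gen_head_eq_last hg' (by simp)
      rw [Prod.ext_iff] at h2
      have : ((i + 1 : ℕ) : ℤ) = 0 := h2.1
      omega
    obtain ⟨h, hhd, hs, hgen⟩ := gen_uncons hg' htl
    have hmem : h ∈ tl := List.mem_of_mem_head? (by rw [hhd]; rfl)
    have hmono := gen_mono tl hgen.2.2.2.1 _ _ h hgen.2.1 hgen.2.2.1 hmem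
    have m4 : h.2 ≤ (0 : ℤ) := hmono.2.2.2
    rcases hs with hcase | hcase | hcase
    · refine ⟨tl, ?_, rfl⟩
      rw [isRSch_iff_gen]
      have he : h = (((i : ℕ) : ℤ), (0 : ℤ)) := by
        rw [hcase, Prod.ext_iff]; constructor
        · show ((i + 1 : ℕ) : ℤ) - 1 = (i : ℕ) ; push_cast; ring
        · rfl
      rw [he] at hgen; exact hgen
    · rw [hcase] at m4; simp at m4
    · rw [hcase] at m4; simp at m4
  · rintro ⟨Q, hQ, rfl⟩
    rw [isRSch_iff_gen]
    refine gen_cons (isRSch_iff_gen.mp hQ) ?_ ?_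
    · left
      rw [Prod.ext_iff]; constructor
      · show ((i : ℕ) : ℤ) = ((i + 1 : ℕ) : ℤ) - 1; push_cast; ring
      · rfl
    · intro habs
      exfalso
      rw [Prod.ext_iff] at habs
      have : (0 : ℤ) = 0 + 1 := habs.2
      omega

lemma map_sh_unsh (tl : List (ℤ × ℤ)) : List.map sh (List.map unsh tl) = tl := by
  rw [List.map_map]
  have h : List.map (sh ∘ unsh) tl = List.map id tl :=
    List.map_congr_left fun a _ => sh_unsh a
  rw [h, List.map_id]

lemma setL4 (i j : ℕ) : {P : List (ℤ × ℤ) | IsRSch P (i + 1) (j + 1)} =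
    ((fun Q => (((i + 1 : ℕ) : ℤ), (0 : ℤ)) :: Q) '' {Q | IsRSch Q i (j + 1)} ∪
     (fun Q => (((i + 1 : ℕ) : ℤ), (0 : ℤ)) :: Q.map sh) '' {Q | IsRSch Q (i + 1) j}) ∪
    (fun Q => (((i + 1 : ℕ) : ℤ), (0 : ℤ)) :: Q.map sh) '' {Q | IsRSch Q i j} := by
  ext P
  simp only [Set.mem_setOf_eq, Set.mem_union, Set.mem_image]
  constructor
  · intro hg
    obtain hg' := isRSch_iff_gen.mp hg
    rcases P with _ | ⟨v, tl⟩
    · exact absurd rfl hg'.1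
    have hv : v = (((i + 1 : ℕ) : ℤ), (0 : ℤ)) := by simpa using hg'.2.1
    subst hv
    have htl : tl ≠ [] := by
      intro h; subst h
      have h2 := gen_head_eq_last hg' (by simp)
      rw [Prod.ext_iff] at h2
      have : ((i + 1 : ℕ) : ℤ) = 0 := h2.1
      omega
    obtain ⟨h, hhd, hs, hgen⟩ := gen_uncons hg' htl
    rcases hs with hcase | hcase | hcase
    · refine Or.inl (Or.inl ⟨tl, ?_, rfl⟩)
      rw [isRSch_iff_gen]
      have he : h = (((i : ℕ) : ℤ), (0 : ℤ)) := by
        rw [hcase, Prod.ext_iff]; constructor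
        · show ((i + 1 : ℕ) : ℤ) - 1 = (i : ℕ); push_cast; ring
        · rfl
      rw [he] at hgen; exact hgen
    · refine Or.inl (Or.inr ⟨tl.map unsh, ?_, ?_⟩)
      · rw [isRSch_iff_gen]
        have hgen' := gen_map unsh sh sh_unsh (fun p q hpq => schStep_unsh hpq) hup_sh hgen
        have he1 : unsh h = (((i + 1 : ℕ) : ℤ), (0 : ℤ)) := by
          rw [hcase]; simp [unsh]
        have he2 : unsh ((0 : ℤ), ((j + 1 : ℕ) : ℤ)) = ((0 : ℤ), ((j : ℕ) : ℤ)) := by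
          simp [unsh, Prod.ext_iff]
        rw [he1, he2] at hgen'; exact hgen'
      · rw [map_sh_unsh]
    · refine Or.inr ⟨tl.map unsh, ?_, ?_⟩
      · rw [isRSch_iff_gen]
        have hgen' := gen_map unsh sh sh_unsh (fun p q hpq => schStep_unsh hpq) hup_sh hgen
        have he1 : unsh h = (((i : ℕ) : ℤ), (0 : ℤ)) := by
          rw [hcase]; simp [unsh, Prod.ext_iff]
        have he2 : unsh ((0 : ℤ), ((j + 1 : ℕ) : ℤ)) = ((0 : ℤ), ((j : ℕ) : ℤ)) := by
          simp [unsh, Prod.ext_iff]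
        rw [he1, he2] at hgen'; exact hgen'
      · rw [map_sh_unsh]
  · rintro ((⟨Q, hQ, rfl⟩ | ⟨Q, hQ, rfl⟩) | ⟨Q, hQ, rfl⟩)
    · rw [isRSch_iff_gen]
      refine gen_cons (isRSch_iff_gen.mp hQ) ?_ ?_
      · left
        rw [Prod.ext_iff]; constructor
        · show ((i : ℕ) : ℤ) = ((i + 1 : ℕ) : ℤ) - 1; push_cast; ring
        · rfl
      · intro habs
        exfalso
        rw [Prod.ext_iff] at habs
        have : (0 : ℤ) = 0 + 1 := habs.2
        omega
    · rw [isRSch_iff_gen]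
      have hQ' := gen_map sh unsh unsh_sh (fun p q hpq => schStep_sh hpq) hup_unsh
        (isRSch_iff_gen.mp hQ)
      have he1 : sh (((i + 1 : ℕ) : ℤ), (0 : ℤ)) = (((i + 1 : ℕ) : ℤ), (1 : ℤ)) := by
        simp [sh]
      have he2 : sh ((0 : ℤ), ((j : ℕ) : ℤ)) = ((0 : ℤ), ((j + 1 : ℕ) : ℤ)) := by
        simp [sh, Prod.ext_iff]
      rw [he1, he2] at hQ'
      refine gen_cons hQ' ?_ ?_
      · right; left
        rw [Prod.ext_iff]
        exact ⟨rfl, rfl⟩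
      · intro _
        rw [List.length_map]
        by_contra hcon
        have h2 := gen_head_eq_last (isRSch_iff_gen.mp hQ) (by omega)
        rw [Prod.ext_iff] at h2
        have : ((i + 1 : ℕ) : ℤ) = 0 := h2.1
        omega
    · rw [isRSch_iff_gen]
      have hQ' := gen_map sh unsh unsh_sh (fun p q hpq => schStep_sh hpq) hup_unsh
        (isRSch_iff_gen.mp hQ)
      have he1 : sh (((i : ℕ) : ℤ), (0 : ℤ)) = (((i : ℕ) : ℤ), (1 : ℤ)) := by
        simp [sh]
      have he2 : sh ((0 : ℤ), ((j : ℕ) : ℤ)) = ((0 : ℤ), ((j + 1 : ℕ) : ℤ)) := by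
        simp [sh, Prod.ext_iff]
      rw [he1, he2] at hQ'
      refine gen_cons hQ' ?_ ?_
      · right; right
        rw [Prod.ext_iff]; constructor
        · show ((i : ℕ) : ℤ) = ((i + 1 : ℕ) : ℤ) - 1; push_cast; ring
        · rfl
      · intro habs
        exfalso
        rw [Prod.ext_iff] at habs
        have : ((i : ℕ) : ℤ) = ((i + 1 : ℕ) : ℤ) := habs.1
        push_cast at this; omega

lemma stilde_zero_zero : Stilde 0 0 = 1 := by
  rw [stilde_ncard, setL1, Set.ncard_singleton]

lemma stilde_zero (j : ℕ) : Stilde 0 (j + 1) = 0 := by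
  rw [stilde_ncard, setL2, Set.ncard_empty]

lemma stilde_succ_zero (i : ℕ) : Stilde (i + 1) 0 = Stilde i 0 := by
  rw [stilde_ncard, stilde_ncard, setL3,
    Set.ncard_image_of_injective _ (fun a b h => by injection h)]

lemma stilde_base (i : ℕ) : Stilde i 0 = 1 := by
  induction i with
  | zero => exact stilde_zero_zero
  | succ n ih => rw [stilde_succ_zero, ih]

lemma head?_of_isRSch {Q : List (ℤ × ℤ)} {a b : ℕ} (h : IsRSch Q a b) :
    Q.head? = some (((a : ℕ) : ℤ), (0 : ℤ)) := (isRSch_iff_gen.mp h).2.1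

lemma stilde_rec (i j : ℕ) :
    Stilde (i + 1) (j + 1) = Stilde i (j + 1) + Stilde (i + 1) j + Stilde i j := by
  have hinj1 : Function.Injective
      (fun Q : List (ℤ × ℤ) => (((i + 1 : ℕ) : ℤ), (0 : ℤ)) :: Q) :=
    fun a b h => by injection h
  have hinj2 : Function.Injective
      (fun Q : List (ℤ × ℤ) => (((i + 1 : ℕ) : ℤ), (0 : ℤ)) :: Q.map sh) := by
    intro a b h
    injection h with _ h2
    exact List.map_injective_iff.mpr sh_inj h2
  have hfin1 := (isRSch_finite i (j + 1)).image
      (fun Q : List (ℤ × ℤ) => (((i + 1 : ℕ) : ℤ), (0 : ℤ)) :: Q)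
  have hfin2 := (isRSch_finite (i + 1) j).image
      (fun Q : List (ℤ × ℤ) => (((i + 1 : ℕ) : ℤ), (0 : ℤ)) :: Q.map sh)
  have hfin3 := (isRSch_finite i j).image
      (fun Q : List (ℤ × ℤ) => (((i + 1 : ℕ) : ℤ), (0 : ℤ)) :: Q.map sh)
  have hd12 : Disjoint
      ((fun Q : List (ℤ × ℤ) => (((i + 1 : ℕ) : ℤ), (0 : ℤ)) :: Q) '' {Q | IsRSch Q i (j + 1)})
      ((fun Q : List (ℤ × ℤ) => (((i + 1 : ℕ) : ℤ), (0 : ℤ)) :: Q.map sh) ''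
        {Q | IsRSch Q (i + 1) j}) := by
    rw [Set.disjoint_left]
    rintro P ⟨Q, hQ, rfl⟩ ⟨Q', hQ', heq⟩
    injection heq with _ h2
    have h3 : (Q'.map sh).head? = Q.head? := by rw [h2]
    rw [List.head?_map, head?_of_isRSch hQ, head?_of_isRSch hQ'] at h3
    simp [sh, Prod.ext_iff] at h3
  have hd13 : Disjoint
      ((fun Q : List (ℤ × ℤ) => (((i + 1 : ℕ) : ℤ), (0 : ℤ)) :: Q) '' {Q | IsRSch Q i (j + 1)})
      ((fun Q : List (ℤ × ℤ) => (((i + 1 : ℕ) : ℤ), (0 : ℤ)) :: Q.map sh) ''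
        {Q | IsRSch Q i j}) := by
    rw [Set.disjoint_left]
    rintro P ⟨Q, hQ, rfl⟩ ⟨Q', hQ', heq⟩
    injection heq with _ h2
    have h3 : (Q'.map sh).head? = Q.head? := by rw [h2]
    rw [List.head?_map, head?_of_isRSch hQ, head?_of_isRSch hQ'] at h3
    simp [sh, Prod.ext_iff] at h3
  have hd23 : Disjoint
      ((fun Q : List (ℤ × ℤ) => (((i + 1 : ℕ) : ℤ), (0 : ℤ)) :: Q.map sh) ''
        {Q | IsRSch Q (i + 1) j})
      ((fun Q : List (ℤ × ℤ) => (((i + 1 : ℕ) : ℤ), (0 : ℤ)) :: Q.map sh) ''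
        {Q | IsRSch Q i j}) := by
    rw [Set.disjoint_left]
    rintro P ⟨Q, hQ, rfl⟩ ⟨Q', hQ', heq⟩
    injection heq with _ h2
    have h3 : (Q'.map sh).head? = (Q.map sh).head? := by rw [h2]
    rw [List.head?_map, List.head?_map, head?_of_isRSch hQ, head?_of_isRSch hQ'] at h3
    simp [sh, Prod.ext_iff] at h3
  rw [stilde_ncard, stilde_ncard, stilde_ncard, stilde_ncard, setL4,
    Set.ncard_union_eq (Set.disjoint_union_left.mpr ⟨hd13, hd23⟩) (hfin1.union hfin2) hfin3,
    Set.ncard_union_eq hd12 hfin1 hfin2,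
    Set.ncard_image_of_injective _ hinj1, Set.ncard_image_of_injective _ hinj2,
    Set.ncard_image_of_injective _ hinj2]

lemma stilde_col1 (i : ℕ) : Stilde i 1 = 2 * i := by
  induction i with
  | zero => rw [stilde_zero]
  | succ n ih =>
    rw [stilde_rec, ih, stilde_base, stilde_base]
    ring

/-! ### Auxiliary: power series coefficients -/

lemma cf_add (a b : ℕ) (G H : MvPowerSeries (Fin 2) ℂ) :
    cf a b (G + H) = cf a b G + cf a b H := by
  unfold cf; exact map_add (MvPowerSeries.coeff _) G H

lemma single_le_add (a b : ℕ) :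
    Finsupp.single (0 : Fin 2) 1 ≤ Finsupp.single (0 : Fin 2) (a + 1) + Finsupp.single 1 b := by
  rw [Finsupp.le_def]
  intro s
  fin_cases s <;> simp [Finsupp.single_apply]

lemma cf_Pr_mul (a b : ℕ) (G : MvPowerSeries (Fin 2) ℂ) :
    cf (a + 1) b (Pr * G) = cf a b G := by
  unfold cf Pr
  rw [MvPowerSeries.X_def, MvPowerSeries.coeff_monomial_mul, if_pos (single_le_add a b), one_mul]
  have hsub : (Finsupp.single (0 : Fin 2) (a + 1) + Finsupp.single 1 b) - Finsupp.single 0 1 =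
      Finsupp.single (0 : Fin 2) a + Finsupp.single 1 b := by
    ext s; fin_cases s <;> simp [Finsupp.single_apply, Finsupp.tsub_apply]
  rw [hsub]

lemma cf_Pr_mul0 (b : ℕ) (G : MvPowerSeries (Fin 2) ℂ) : cf 0 b (Pr * G) = 0 := by
  unfold cf Pr
  rw [MvPowerSeries.X_def, MvPowerSeries.coeff_monomial_mul, if_neg]
  rw [Finsupp.le_def]
  push_neg
  refine ⟨0, ?_⟩
  simp [Finsupp.single_apply]

lemma cf_Ps_mul (a b : ℕ) (G : MvPowerSeries (Fin 2) ℂ) :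
    cf a (b + 1) (Ps * G) = cf a b G := by
  unfold cf Ps
  rw [MvPowerSeries.X_def, MvPowerSeries.coeff_monomial_mul, if_pos, one_mul]
  · have hsub : (Finsupp.single (0 : Fin 2) a + Finsupp.single 1 (b + 1)) - Finsupp.single 1 1 =
        Finsupp.single (0 : Fin 2) a + Finsupp.single 1 b := by
      ext s; fin_cases s <;> simp [Finsupp.single_apply, Finsupp.tsub_apply]
    rw [hsub]
  · rw [Finsupp.le_def]
    intro s
    fin_cases s <;> simp [Finsupp.single_apply]

lemma cf_Ps_mul0 (a : ℕ) (G : MvPowerSeries (Fin 2) ℂ) : cf a 0 (Ps * G) = 0 := by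
  unfold cf Ps
  rw [MvPowerSeries.X_def, MvPowerSeries.coeff_monomial_mul, if_neg]
  rw [Finsupp.le_def]
  push_neg
  refine ⟨1, ?_⟩
  simp [Finsupp.single_apply]

lemma cf_Pr_if (a b : ℕ) : cf a b Pr = if a = 1 ∧ b = 0 then 1 else 0 := by
  unfold cf Pr
  rw [MvPowerSeries.coeff_X]
  by_cases h : a = 1 ∧ b = 0
  · obtain ⟨rfl, rfl⟩ := h
    rw [if_pos (by simp), if_pos ⟨rfl, rfl⟩]
  · rw [if_neg h, if_neg]
    intro hc
    apply h
    have h0 := DFunLike.congr_fun hc (0 : Fin 2)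
    have h1 := DFunLike.congr_fun hc (1 : Fin 2)
    simp [Finsupp.single_apply] at h0 h1
    exact ⟨h0, h1⟩

/-- The main generating function. -/
noncomputable def Fgen : MvPowerSeries (Fin 2) ℂ :=
  2 * Pr * ((1 - Pr) * (1 - Pr - Ps - Pr * Ps))⁻¹

lemma cf_master (a b : ℕ) :
    cf a b Fgen + cf a b (Pr * (Pr * Fgen)) + cf a b (Pr * (Pr * (Ps * Fgen))) =
    (cf a b Pr + cf a b Pr) + (cf a b (Pr * Fgen) + cf a b (Pr * Fgen)) +
      cf a b (Ps * Fgen) := by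
  have hD : MvPowerSeries.constantCoeff (σ := Fin 2) (R := ℂ) ((1 - Pr) * (1 - Pr - Ps - Pr * Ps)) ≠ 0 := by
    simp [Pr, Ps]
  have FD : Fgen * ((1 - Pr) * (1 - Pr - Ps - Pr * Ps)) = 2 * Pr := by
    rw [Fgen, mul_assoc, MvPowerSeries.inv_mul_cancel _ hD, mul_one]
  have master : Fgen + Pr * (Pr * Fgen) + Pr * (Pr * (Ps * Fgen)) =
      (Pr + Pr) + (Pr * Fgen + Pr * Fgen) + Ps * Fgen := by
    linear_combination FD
  calc cf a b Fgen + cf a b (Pr * (Pr * Fgen)) + cf a b (Pr * (Pr * (Ps * Fgen)))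
      = cf a b (Fgen + Pr * (Pr * Fgen) + Pr * (Pr * (Ps * Fgen))) := by
        rw [cf_add, cf_add]
    _ = cf a b ((Pr + Pr) + (Pr * Fgen + Pr * Fgen) + Ps * Fgen) := by rw [master]
    _ = _ := by rw [cf_add, cf_add, cf_add, cf_add]

lemma key : ∀ n i j, i + j = n → (Stilde i (j + 1) : ℂ) = cf i j Fgen := by
  intro n
  induction n using Nat.strong_induction_on with
  | _ n IH =>
  intro i j hn
  rcases i with _ | _ | i
  · rcases j with _ | j
    · have hm := cf_master 0 0
      simp only [cf_Pr_mul0, cf_Ps_mul0, cf_Pr_if] at hm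
      norm_num at hm
      rw [stilde_zero]
      simp [hm]
    · have hm := cf_master 0 (j + 1)
      simp only [cf_Pr_mul0, cf_Ps_mul, cf_Pr_if] at hm
      norm_num at hm
      have hA := IH (0 + j) (by omega) 0 j rfl
      have hY : cf 0 j Fgen = 0 := by rw [← hA, stilde_zero]; norm_num
      rw [stilde_zero, hm, hY]
      norm_num
  · rcases j with _ | j
    · have hm := cf_master (0 + 1) 0
      simp only [cf_Pr_mul, cf_Pr_mul0, cf_Ps_mul0, cf_Pr_if] at hm
      norm_num at hm
      have hA := IH 0 (by omega) 0 0 rfl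
      have hY : cf 0 0 Fgen = 0 := by rw [← hA, stilde_zero]; norm_num
      rw [hY] at hm
      rw [stilde_col1]
      push_cast
      linear_combination -hm
    · have hm := cf_master (0 + 1) (j + 1)
      simp only [cf_Pr_mul, cf_Pr_mul0, cf_Ps_mul, cf_Pr_if] at hm
      norm_num at hm
      have hA := IH (0 + (j + 1)) (by omega) 0 (j + 1) rfl
      have hB := IH (0 + 1 + j) (by omega) (0 + 1) j rfl
      have hY : cf 0 (j + 1) Fgen = 0 := by rw [← hA, stilde_zero]; norm_num
      rw [hY] at hm
      rw [stilde_rec]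
      push_cast
      rw [stilde_zero, stilde_zero]
      push_cast
      linear_combination hB - hm
  · rcases j with _ | j
    · have hm := cf_master (i + 1 + 1) 0
      simp only [cf_Pr_mul, cf_Pr_mul0, cf_Ps_mul0, cf_Pr_if] at hm
      norm_num at hm
      have hA := IH (i + 1 + 0) (by omega) (i + 1) 0 rfl
      have hB := IH (i + 0) (by omega) i 0 rfl
      rw [stilde_col1] at hA hB ⊢
      push_cast at hA hB ⊢
      linear_combination 2 * hA - hB - hm
    · have hm := cf_master (i + 1 + 1) (j + 1)
      simp only [cf_Pr_mul, cf_Pr_mul0, cf_Ps_mul, cf_Pr_if] at hm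
      norm_num at hm
      have hA := IH (i + 1 + (j + 1)) (by omega) (i + 1) (j + 1) rfl
      have hB := IH (i + 1 + 1 + j) (by omega) (i + 1 + 1) j rfl
      have hC := IH (i + (j + 1)) (by omega) i (j + 1) rfl
      have hD := IH (i + j) (by omega) i j rfl
      have hr1 := congrArg (fun m : ℕ => (m : ℂ)) (stilde_rec (i + 1) (j + 1))
      have hr2 := congrArg (fun m : ℕ => (m : ℂ)) (stilde_rec i (j + 1))
      push_cast at hr1 hr2
      linear_combination hr1 - hr2 + 2 * hA + hB - hC - hD - hm

/-- `S̃_{i,j+1}` is the coefficient of `r^i s^j` in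
`2r/((1-r)(1-r-s-rs))`; in particular `S̃_{0,j+1} = 0` and `S̃_{i,1} = 2i`. -/
theorem Stilde_generating_function (i j : ℕ) :
    ((Stilde i (j + 1) : ℂ) =
      cf i j (2 * Pr * ((1 - Pr) * (1 - Pr - Ps - Pr * Ps))⁻¹)) ∧
    Stilde 0 (j + 1) = 0 ∧ Stilde i 1 = 2 * i := by
  refine ⟨?_, stilde_zero j, stilde_col1 i⟩
  exact key (i + j) i j rfl

end Paper20V
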